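/- For κ in an interval (0, κ₀], the map κ ↦ ρ(κ) := lim_n ‖T_κ^n‖^{1/n} is log-convex and continuous on (0, κ₀), where T_κ f(x) = E[|xM|^κ f((xM)^∼)]. Consequently, if ρ(κ₂) < 1 < ρ(κ₁) for some 0 < κ₂ < κ₁ < κ₀, there exists a unique κ ∈ (κ₂, κ₁) with ρ(κ) = 1. -/

import Mathlib

open MeasureTheory Filter Set

instance matrixMeasurableSpace {d : ℕ} : MeasurableSpace (Matrix (Fin d) (Fin d) ℝ) :=
  inferInstanceAs (MeasurableSpace ((Fin d) → (Fin d) → ℝ))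

/-- Row-vector action `x ↦ xA` of a matrix on Euclidean space. -/
noncomputable def vecMulE {d : ℕ} (x : EuclideanSpace ℝ (Fin d))
    (A : Matrix (Fin d) (Fin d) ℝ) : EuclideanSpace ℝ (Fin d) :=
  (EuclideanSpace.equiv (Fin d) ℝ).symm (Matrix.vecMul ((EuclideanSpace.equiv (Fin d) ℝ) x) A)

/-- Operator norm `‖A‖ = sup_{|x|=1} |xA|` for the row action. -/
noncomputable def opNormRow {d : ℕ} (A : Matrix (Fin d) (Fin d) ℝ) : ℝ :=
  ⨆ x : {x : EuclideanSpace ℝ (Fin d) // ‖x‖ = 1}, ‖vecMulE x.1 A‖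

/-- Projection of a nonzero vector onto the unit sphere. -/
noncomputable def projS {d : ℕ} (v : EuclideanSpace ℝ (Fin d)) (hv : v ≠ 0) :
    Metric.sphere (0 : EuclideanSpace ℝ (Fin d)) 1 :=
  ⟨‖v‖⁻¹ • v, by
    have h : ‖v‖ ≠ 0 := norm_ne_zero_iff.mpr hv
    simp [mem_sphere_zero_iff_norm, norm_smul, abs_of_nonneg (inv_nonneg.mpr (norm_nonneg v)),
      inv_mul_cancel₀ h]⟩

/- ### Auxiliary material -/

instance matrixBorelSpace {d : ℕ} : BorelSpace (Matrix (Fin d) (Fin d) ℝ) :=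
  inferInstanceAs (BorelSpace ((Fin d) → (Fin d) → ℝ))

theorem aux_holder_int {Ω : Type*} [MeasurableSpace Ω] {μ : Measure Ω}
    {F G : Ω → ℝ} (hF : Integrable F μ) (hG : Integrable G μ)
    (hF0 : ∀ ω, 0 ≤ F ω) (hG0 : ∀ ω, 0 ≤ G ω)
    {p q : ℝ} (hp : 0 ≤ p) (hq : 0 ≤ q) (hpq : p + q = 1) :
    Integrable (fun ω => F ω ^ p * G ω ^ q) μ := by
  refine Integrable.mono' ((hF.const_mul p).add (hG.const_mul q)) ?_ ?_
  · exact ((hF.aemeasurable.pow aemeasurable_const).mul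
      (hG.aemeasurable.pow aemeasurable_const)).aestronglyMeasurable
  · refine Eventually.of_forall fun ω => ?_
    rw [Real.norm_of_nonneg (mul_nonneg (Real.rpow_nonneg (hF0 ω) _) (Real.rpow_nonneg (hG0 ω) _))]
    exact Real.geom_mean_le_arith_mean2_weighted hp hq (hF0 ω) (hG0 ω) hpq

theorem aux_holder {Ω : Type*} [MeasurableSpace Ω] (μ : Measure Ω)
    {F G : Ω → ℝ} (hF : Integrable F μ) (hG : Integrable G μ)
    (hF0 : ∀ ω, 0 ≤ F ω) (hG0 : ∀ ω, 0 ≤ G ω)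
    {p q : ℝ} (hp : 0 ≤ p) (hq : 0 ≤ q) (hpq : p + q = 1) :
    ∫ ω, F ω ^ p * G ω ^ q ∂μ ≤ (∫ ω, F ω ∂μ) ^ p * (∫ ω, G ω ∂μ) ^ q := by
  have hFm := hF.aemeasurable
  have hGm := hG.aemeasurable
  have hmul : Integrable (fun ω => F ω ^ p * G ω ^ q) μ := by
    refine Integrable.mono' ((hF.const_mul p).add (hG.const_mul q)) ?_ ?_
    · exact ((hFm.pow aemeasurable_const).mul (hGm.pow aemeasurable_const)).aestronglyMeasurable
    · refine Eventually.of_forall fun ω => ?_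
      rw [Real.norm_of_nonneg (mul_nonneg (Real.rpow_nonneg (hF0 ω) _) (Real.rpow_nonneg (hG0 ω) _))]
      exact Real.geom_mean_le_arith_mean2_weighted hp hq (hF0 ω) (hG0 ω) hpq
  have key := ENNReal.lintegral_mul_norm_pow_le (μ := μ)
    (hFm.ennreal_ofReal) (hGm.ennreal_ofReal) hp hq hpq
  have h1 : ∫⁻ ω, ENNReal.ofReal (F ω) ^ p * ENNReal.ofReal (G ω) ^ q ∂μ
      = ENNReal.ofReal (∫ ω, F ω ^ p * G ω ^ q ∂μ) := by
    rw [MeasureTheory.ofReal_integral_eq_lintegral_ofReal hmul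
      (Eventually.of_forall fun ω => mul_nonneg (Real.rpow_nonneg (hF0 ω) _) (Real.rpow_nonneg (hG0 ω) _))]
    refine lintegral_congr fun ω => ?_
    rw [ENNReal.ofReal_mul (Real.rpow_nonneg (hF0 ω) _),
      ENNReal.ofReal_rpow_of_nonneg (hF0 ω) hp, ENNReal.ofReal_rpow_of_nonneg (hG0 ω) hq]
  have h2 : ∫⁻ ω, ENNReal.ofReal (F ω) ∂μ = ENNReal.ofReal (∫ ω, F ω ∂μ) :=
    (MeasureTheory.ofReal_integral_eq_lintegral_ofReal hF (Eventually.of_forall hF0)).symm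
  have h3 : ∫⁻ ω, ENNReal.ofReal (G ω) ∂μ = ENNReal.ofReal (∫ ω, G ω ∂μ) :=
    (MeasureTheory.ofReal_integral_eq_lintegral_ofReal hG (Eventually.of_forall hG0)).symm
  rw [h1, h2, h3] at key
  have hIF : 0 ≤ ∫ ω, F ω ∂μ := integral_nonneg hF0
  have hIG : 0 ≤ ∫ ω, G ω ∂μ := integral_nonneg hG0
  rw [ENNReal.ofReal_rpow_of_nonneg hIF hp, ENNReal.ofReal_rpow_of_nonneg hIG hq,
    ← ENNReal.ofReal_mul (Real.rpow_nonneg hIF _)] at key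
  exact (ENNReal.ofReal_le_ofReal_iff (mul_nonneg (Real.rpow_nonneg hIF _) (Real.rpow_nonneg hIG _))).mp key

theorem aux_vecMulE_meas {d : ℕ} {Ω : Type*} [MeasurableSpace Ω] (M : Ω → Matrix (Fin d) (Fin d) ℝ)
    (hM : Measurable M) (x : EuclideanSpace ℝ (Fin d)) :
    Measurable fun ω => vecMulE x (M ω) := by
  have h : Continuous fun A : Matrix (Fin d) (Fin d) ℝ => vecMulE x A := by
    unfold vecMulE
    exact (EuclideanSpace.equiv (Fin d) ℝ).symm.continuous.comp
      (continuous_const.matrix_vecMul continuous_id)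
  exact h.measurable.comp hM

theorem aux_opNormRow_nonneg {d : ℕ} (A : Matrix (Fin d) (Fin d) ℝ) : 0 ≤ opNormRow A :=
  Real.iSup_nonneg fun x => norm_nonneg _

theorem aux_norm_vecMulE_le {d : ℕ} (x : Metric.sphere (0 : EuclideanSpace ℝ (Fin d)) 1)
    (A : Matrix (Fin d) (Fin d) ℝ) : ‖vecMulE x.1 A‖ ≤ opNormRow A := by
  have hb : BddAbove (range fun y : {y : EuclideanSpace ℝ (Fin d) // ‖y‖ = 1} => ‖vecMulE y.1 A‖) := by
    have hc : Continuous fun y : EuclideanSpace ℝ (Fin d) => ‖vecMulE y A‖ := by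
      have : Continuous fun y : EuclideanSpace ℝ (Fin d) => vecMulE y A := by
        unfold vecMulE
        exact (EuclideanSpace.equiv (Fin d) ℝ).symm.continuous.comp
          ((EuclideanSpace.equiv (Fin d) ℝ).continuous.matrix_vecMul continuous_const)
      exact this.norm
    have heq : (range fun y : {y : EuclideanSpace ℝ (Fin d) // ‖y‖ = 1} => ‖vecMulE y.1 A‖)
        = (fun y : EuclideanSpace ℝ (Fin d) => ‖vecMulE y A‖) '' (Metric.sphere 0 1) := by
      ext r
      constructor
      · rintro ⟨y, rfl⟩
        exact ⟨y.1, by simp [mem_sphere_zero_iff_norm, y.2], rfl⟩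
      · rintro ⟨y, hy, rfl⟩
        exact ⟨⟨y, mem_sphere_zero_iff_norm.mp hy⟩, rfl⟩
    rw [heq]
    exact ((isCompact_sphere 0 1).image hc).bddAbove
  have hx : ‖(x : EuclideanSpace ℝ (Fin d))‖ = 1 := mem_sphere_zero_iff_norm.mp x.2
  exact le_ciSup hb ⟨x.1, hx⟩

theorem aux_rpow_bound {d : ℕ} {κ₀ κ : ℝ} (hκ : κ ∈ Ioc (0:ℝ) κ₀)
    (x : Metric.sphere (0 : EuclideanSpace ℝ (Fin d)) 1) (A : Matrix (Fin d) (Fin d) ℝ) :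
    ‖vecMulE x.1 A‖ ^ κ ≤ 1 + opNormRow A ^ κ₀ := by
  have h1 : 0 ≤ opNormRow A ^ κ₀ := Real.rpow_nonneg (aux_opNormRow_nonneg A) _
  rcases le_or_gt ‖vecMulE x.1 A‖ 1 with h | h
  · have := Real.rpow_le_one (norm_nonneg _) h hκ.1.le
    linarith
  · have h2 : ‖vecMulE x.1 A‖ ^ κ ≤ ‖vecMulE x.1 A‖ ^ κ₀ :=
      Real.rpow_le_rpow_of_exponent_le h.le hκ.2
    have h3 : ‖vecMulE x.1 A‖ ^ κ₀ ≤ opNormRow A ^ κ₀ :=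
      Real.rpow_le_rpow (norm_nonneg _) (aux_norm_vecMulE_le x A) (hκ.1.le.trans hκ.2)
    linarith

theorem aux_kernel_meas {d : ℕ} {Ω : Type*} [MeasurableSpace Ω]
    (M : Ω → Matrix (Fin d) (Fin d) ℝ) (hM : Measurable M)
    (hne : ∀ (x : Metric.sphere (0 : EuclideanSpace ℝ (Fin d)) 1) (ω : Ω),
      vecMulE x.1 (M ω) ≠ 0)
    (x : Metric.sphere (0 : EuclideanSpace ℝ (Fin d)) 1)
    (f : C(Metric.sphere (0 : EuclideanSpace ℝ (Fin d)) 1, ℝ)) (κ : ℝ) :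
    Measurable fun ω => ‖vecMulE x.1 (M ω)‖ ^ κ *
      f (projS (vecMulE x.1 (M ω)) (hne x ω)) := by
  have hv := aux_vecMulE_meas M hM x.1
  have h1 : Measurable fun ω => ‖vecMulE x.1 (M ω)‖ ^ κ :=
    hv.norm.pow measurable_const
  have h2 : Measurable fun ω => f (projS (vecMulE x.1 (M ω)) (hne x ω)) := by
    simp only [projS]
    exact f.continuous.measurable.comp (Measurable.subtype_mk ((hv.norm.inv).smul hv))
  exact h1.mul h2

theorem aux_kernel_int {d : ℕ} {Ω : Type*} [MeasurableSpace Ω]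
    (μ : Measure Ω) [IsProbabilityMeasure μ]
    (M : Ω → Matrix (Fin d) (Fin d) ℝ) (hM : Measurable M)
    {κ₀ : ℝ} (hInt : Integrable (fun ω => opNormRow (M ω) ^ κ₀) μ)
    (hne : ∀ (x : Metric.sphere (0 : EuclideanSpace ℝ (Fin d)) 1) (ω : Ω),
      vecMulE x.1 (M ω) ≠ 0)
    (x : Metric.sphere (0 : EuclideanSpace ℝ (Fin d)) 1)
    (f : C(Metric.sphere (0 : EuclideanSpace ℝ (Fin d)) 1, ℝ)) {κ : ℝ}
    (hκ : κ ∈ Ioc (0:ℝ) κ₀) :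
    Integrable (fun ω => ‖vecMulE x.1 (M ω)‖ ^ κ *
      f (projS (vecMulE x.1 (M ω)) (hne x ω))) μ := by
  refine Integrable.mono' (((integrable_const (1:ℝ)).add hInt).const_mul ‖f‖)
    (aux_kernel_meas M hM hne x f κ).aestronglyMeasurable ?_
  refine Eventually.of_forall fun ω => ?_
  rw [Real.norm_eq_abs, abs_mul, abs_of_nonneg (Real.rpow_nonneg (norm_nonneg _) _)]
  calc ‖vecMulE x.1 (M ω)‖ ^ κ * |f (projS (vecMulE x.1 (M ω)) (hne x ω))|
      ≤ (1 + opNormRow (M ω) ^ κ₀) * ‖f‖ := by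
        apply mul_le_mul (aux_rpow_bound hκ x (M ω)) ?_ (abs_nonneg _) ?_
        · rw [← Real.norm_eq_abs]
          exact f.norm_coe_le_norm _
        · have := Real.rpow_nonneg (aux_opNormRow_nonneg (M ω)) κ₀
          linarith
    _ = ‖f‖ * (1 + opNormRow (M ω) ^ κ₀) := mul_comm _ _
/-- The spectral radius `ρ(κ) = lim ‖T_κ^n‖^{1/n}` of `T_κ f(x) = E[|xM|^κ f((xM)^∼)]` is
log-convex and continuous on `(0, κ₀)`; consequently if `ρ(κ₂) < 1 < ρ(κ₁)` for
`0 < κ₂ < κ₁ < κ₀`, there is a unique `κ ∈ (κ₂, κ₁)` with `ρ(κ) = 1`. -/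
theorem stmt15 {d : ℕ} (hd : 0 < d) {Ω : Type*} [MeasurableSpace Ω]
    (μ : Measure Ω) [IsProbabilityMeasure μ]
    (M : Ω → Matrix (Fin d) (Fin d) ℝ) (hM : Measurable M)
    (hGL : ∀ ω, IsUnit (M ω)) (κ₀ : ℝ) (hκ₀ : 0 < κ₀)
    (hInt : Integrable (fun ω => opNormRow (M ω) ^ κ₀) μ)
    (hne : ∀ (x : Metric.sphere (0 : EuclideanSpace ℝ (Fin d)) 1) (ω : Ω),
      vecMulE x.1 (M ω) ≠ 0)
    (T : ℝ → (C(Metric.sphere (0 : EuclideanSpace ℝ (Fin d)) 1, ℝ)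
        →L[ℝ] C(Metric.sphere (0 : EuclideanSpace ℝ (Fin d)) 1, ℝ)))
    (hT : ∀ k ∈ Ioc (0 : ℝ) κ₀,
      ∀ (f : C(Metric.sphere (0 : EuclideanSpace ℝ (Fin d)) 1, ℝ))
        (x : Metric.sphere (0 : EuclideanSpace ℝ (Fin d)) 1),
      (T k) f x = ∫ ω, (‖vecMulE x.1 (M ω)‖ ^ k) *
        f (projS (vecMulE x.1 (M ω)) (hne x ω)) ∂μ)
    (ρ : ℝ → ℝ)
    (hρ : ∀ k ∈ Ioc (0 : ℝ) κ₀,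
      Tendsto (fun n : ℕ => ‖(T k) ^ n‖ ^ ((1 : ℝ) / n)) atTop (nhds (ρ k))) :
    ConvexOn ℝ (Ioo 0 κ₀) (fun k => Real.log (ρ k)) ∧
    ContinuousOn ρ (Ioo 0 κ₀) ∧
    ∀ κ₂ κ₁ : ℝ, 0 < κ₂ → κ₂ < κ₁ → κ₁ < κ₀ → ρ κ₂ < 1 → 1 < ρ κ₁ →
      ∃! k : ℝ, k ∈ Ioo κ₂ κ₁ ∧ ρ k = 1 := by
  haveI hSne : Nonempty (Metric.sphere (0 : EuclideanSpace ℝ (Fin d)) 1) :=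
    ⟨⟨EuclideanSpace.single ⟨0, hd⟩ 1, by
      simp [mem_sphere_zero_iff_norm, EuclideanSpace.norm_single]⟩⟩
  -- positivity
  have hpos : ∀ κ ∈ Ioc (0:ℝ) κ₀, ∀ f : C(Metric.sphere (0 : EuclideanSpace ℝ (Fin d)) 1, ℝ),
      (∀ y, 0 ≤ f y) → ∀ x, 0 ≤ (T κ) f x := by
    intro κ hκ f hf x
    rw [hT κ hκ f x]
    exact integral_nonneg fun ω => mul_nonneg (Real.rpow_nonneg (norm_nonneg _) _) (hf _)
  have hmono : ∀ κ ∈ Ioc (0:ℝ) κ₀, ∀ f g : C(Metric.sphere (0 : EuclideanSpace ℝ (Fin d)) 1, ℝ),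
      (∀ y, f y ≤ g y) → ∀ x, (T κ) f x ≤ (T κ) g x := by
    intro κ hκ f g hfg x
    have h1 := hpos κ hκ (g - f) (fun y => by
      simp only [ContinuousMap.sub_apply]; linarith [hfg y]) x
    have heq : (T κ) (g - f) x = (T κ) g x - (T κ) f x := by
      rw [map_sub]; simp [ContinuousMap.sub_apply]
    linarith
  have hpow : ∀ κ : ℝ, ∀ n : ℕ,
      ∀ f : C(Metric.sphere (0 : EuclideanSpace ℝ (Fin d)) 1, ℝ),
      ((T κ) ^ (n+1)) f = (T κ) (((T κ) ^ n) f) := by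
    intro κ n f
    rw [pow_succ']
    rfl
  have hzero : ∀ κ : ℝ, ∀ f : C(Metric.sphere (0 : EuclideanSpace ℝ (Fin d)) 1, ℝ),
      ((T κ) ^ 0) f = f := by
    intro κ f; rw [pow_zero]; rfl
  have hmono_n : ∀ κ ∈ Ioc (0:ℝ) κ₀, ∀ n : ℕ,
      ∀ f g : C(Metric.sphere (0 : EuclideanSpace ℝ (Fin d)) 1, ℝ),
      (∀ y, f y ≤ g y) → ∀ x, (((T κ) ^ n) f) x ≤ (((T κ) ^ n) g) x := by
    intro κ hκ n
    induction n with
    | zero => intro f g hfg x; rw [hzero, hzero]; exact hfg x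
    | succ n ih =>
      intro f g hfg x
      rw [hpow, hpow]
      exact hmono κ hκ _ _ (fun y => ih f g hfg y) x
  have hposn : ∀ κ ∈ Ioc (0:ℝ) κ₀, ∀ n : ℕ, ∀ x, 0 ≤ (((T κ) ^ n) 1) x := by
    intro κ hκ n
    induction n with
    | zero => intro x; rw [hzero]; norm_num
    | succ n ih =>
      intro x
      rw [hpow]
      exact hpos κ hκ _ ih x
  have habs : ∀ κ ∈ Ioc (0:ℝ) κ₀, ∀ n : ℕ,
      ∀ f : C(Metric.sphere (0 : EuclideanSpace ℝ (Fin d)) 1, ℝ), ∀ x,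
      |(((T κ) ^ n) f) x| ≤ ‖f‖ * (((T κ) ^ n) 1) x := by
    intro κ hκ n f x
    have h1 : ∀ y, f y ≤ (‖f‖ • (1 : C(Metric.sphere (0 : EuclideanSpace ℝ (Fin d)) 1, ℝ))) y := by
      intro y
      simp only [ContinuousMap.smul_apply, ContinuousMap.one_apply, smul_eq_mul, mul_one]
      have := f.norm_coe_le_norm y
      rw [Real.norm_eq_abs] at this
      exact le_trans (le_abs_self _) this
    have h2 : ∀ y, (-f) y ≤ (‖f‖ • (1 : C(Metric.sphere (0 : EuclideanSpace ℝ (Fin d)) 1, ℝ))) y := by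
      intro y
      simp only [ContinuousMap.neg_apply, ContinuousMap.smul_apply, ContinuousMap.one_apply,
        smul_eq_mul, mul_one]
      have := f.norm_coe_le_norm y
      rw [Real.norm_eq_abs] at this
      exact le_trans (neg_le_abs _) this
    have e1 : (((T κ) ^ n) (‖f‖ • (1 : C(Metric.sphere (0 : EuclideanSpace ℝ (Fin d)) 1, ℝ)))) x
        = ‖f‖ * (((T κ) ^ n) 1) x := by
      rw [_root_.map_smul]
      simp [ContinuousMap.smul_apply]
    have hb1 := hmono_n κ hκ n f _ h1 x
    have hb2 := hmono_n κ hκ n (-f) _ h2 x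
    rw [e1] at hb1
    rw [map_neg] at hb2
    simp only [ContinuousMap.neg_apply] at hb2
    rw [e1] at hb2
    rw [abs_le]
    constructor <;> linarith
  have hnorm_n1 : ∀ κ ∈ Ioc (0:ℝ) κ₀, ∀ n : ℕ, ‖(T κ) ^ n‖ = ‖((T κ) ^ n) 1‖ := by
    intro κ hκ n
    apply le_antisymm
    · refine ContinuousLinearMap.opNorm_le_bound _ (norm_nonneg _) fun f => ?_
      refine (ContinuousMap.norm_le _ (mul_nonneg (norm_nonneg _) (norm_nonneg _))).mpr fun x => ?_
      rw [Real.norm_eq_abs]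
      calc |(((T κ) ^ n) f) x| ≤ ‖f‖ * (((T κ) ^ n) 1) x := habs κ hκ n f x
        _ ≤ ‖f‖ * ‖((T κ) ^ n) 1‖ := by
            have h5 := (((T κ) ^ n) 1).norm_coe_le_norm x
            rw [Real.norm_eq_abs] at h5
            exact mul_le_mul_of_nonneg_left (le_trans (le_abs_self _) h5) (norm_nonneg _)
        _ = ‖((T κ) ^ n) 1‖ * ‖f‖ := mul_comm _ _
    · have h := ((T κ) ^ n).le_opNorm 1
      rwa [norm_one, mul_one] at h
  -- integrability shorthand
  have hKint : ∀ κ ∈ Ioc (0:ℝ) κ₀, ∀ (x : Metric.sphere (0 : EuclideanSpace ℝ (Fin d)) 1)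
      (f : C(Metric.sphere (0 : EuclideanSpace ℝ (Fin d)) 1, ℝ)),
      Integrable (fun ω => ‖vecMulE x.1 (M ω)‖ ^ κ *
        f (projS (vecMulE x.1 (M ω)) (hne x ω))) μ :=
    fun κ hκ x f => aux_kernel_int μ M hM hInt hne x f hκ
  -- key Hölder estimate on iterates
  have hkey : ∀ a ∈ Ioc (0:ℝ) κ₀, ∀ b ∈ Ioc (0:ℝ) κ₀, ∀ t s : ℝ, 0 ≤ t → 0 ≤ s → t + s = 1 →
      t*a+s*b ∈ Ioc (0:ℝ) κ₀ → ∀ n : ℕ, ∀ x,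
      (((T (t*a+s*b)) ^ n) 1) x ≤ ((((T a) ^ n) 1) x) ^ t * ((((T b) ^ n) 1) x) ^ s := by
    intro a ha b hb t s ht hs hts hκ n
    induction n with
    | zero =>
      intro x
      rw [hzero, hzero, hzero]
      simp
    | succ n ih =>
      intro x
      rw [hpow, hpow, hpow, hT _ hκ _ x, hT a ha _ x, hT b hb _ x]
      have hFa0 : ∀ ω, 0 ≤ ‖vecMulE x.1 (M ω)‖ ^ a *
          ((((T a) ^ n) 1) (projS (vecMulE x.1 (M ω)) (hne x ω))) :=
        fun ω => mul_nonneg (Real.rpow_nonneg (norm_nonneg _) _) (hposn a ha n _)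
      have hFb0 : ∀ ω, 0 ≤ ‖vecMulE x.1 (M ω)‖ ^ b *
          ((((T b) ^ n) 1) (projS (vecMulE x.1 (M ω)) (hne x ω))) :=
        fun ω => mul_nonneg (Real.rpow_nonneg (norm_nonneg _) _) (hposn b hb n _)
      have hptw : ∀ ω, ‖vecMulE x.1 (M ω)‖ ^ (t*a+s*b) *
            ((((T (t*a+s*b)) ^ n) 1) (projS (vecMulE x.1 (M ω)) (hne x ω)))
          ≤ (‖vecMulE x.1 (M ω)‖ ^ a *
              ((((T a) ^ n) 1) (projS (vecMulE x.1 (M ω)) (hne x ω)))) ^ t *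
            (‖vecMulE x.1 (M ω)‖ ^ b *
              ((((T b) ^ n) 1) (projS (vecMulE x.1 (M ω)) (hne x ω)))) ^ s := by
        intro ω
        have hvpos : (0:ℝ) < ‖vecMulE x.1 (M ω)‖ := norm_pos_iff.mpr (hne x ω)
        have hsplit : ‖vecMulE x.1 (M ω)‖ ^ (t*a+s*b)
            = (‖vecMulE x.1 (M ω)‖ ^ a) ^ t * (‖vecMulE x.1 (M ω)‖ ^ b) ^ s := by
          rw [Real.rpow_add hvpos, mul_comm t a, mul_comm s b,
            Real.rpow_mul (norm_nonneg _), Real.rpow_mul (norm_nonneg _)]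
        calc ‖vecMulE x.1 (M ω)‖ ^ (t*a+s*b) *
              ((((T (t*a+s*b)) ^ n) 1) (projS (vecMulE x.1 (M ω)) (hne x ω)))
            ≤ ‖vecMulE x.1 (M ω)‖ ^ (t*a+s*b) *
              (((((T a) ^ n) 1) (projS (vecMulE x.1 (M ω)) (hne x ω))) ^ t *
               ((((T b) ^ n) 1) (projS (vecMulE x.1 (M ω)) (hne x ω))) ^ s) :=
              mul_le_mul_of_nonneg_left (ih _) (Real.rpow_nonneg (norm_nonneg _) _)
          _ = (‖vecMulE x.1 (M ω)‖ ^ a *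
                ((((T a) ^ n) 1) (projS (vecMulE x.1 (M ω)) (hne x ω)))) ^ t *
              (‖vecMulE x.1 (M ω)‖ ^ b *
                ((((T b) ^ n) 1) (projS (vecMulE x.1 (M ω)) (hne x ω)))) ^ s := by
              rw [hsplit, Real.mul_rpow (Real.rpow_nonneg (norm_nonneg _) _) (hposn a ha n _),
                Real.mul_rpow (Real.rpow_nonneg (norm_nonneg _) _) (hposn b hb n _)]
              ring
      calc ∫ ω, ‖vecMulE x.1 (M ω)‖ ^ (t*a+s*b) *
            ((((T (t*a+s*b)) ^ n) 1) (projS (vecMulE x.1 (M ω)) (hne x ω))) ∂μ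
          ≤ ∫ ω, (‖vecMulE x.1 (M ω)‖ ^ a *
              ((((T a) ^ n) 1) (projS (vecMulE x.1 (M ω)) (hne x ω)))) ^ t *
            (‖vecMulE x.1 (M ω)‖ ^ b *
              ((((T b) ^ n) 1) (projS (vecMulE x.1 (M ω)) (hne x ω)))) ^ s ∂μ :=
            integral_mono (hKint _ hκ x _)
              (aux_holder_int (hKint a ha x _) (hKint b hb x _) hFa0 hFb0 ht hs hts) hptw
        _ ≤ (∫ ω, ‖vecMulE x.1 (M ω)‖ ^ a *
              ((((T a) ^ n) 1) (projS (vecMulE x.1 (M ω)) (hne x ω))) ∂μ) ^ t *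
            (∫ ω, ‖vecMulE x.1 (M ω)‖ ^ b *
              ((((T b) ^ n) 1) (projS (vecMulE x.1 (M ω)) (hne x ω))) ∂μ) ^ s :=
            aux_holder μ (hKint a ha x _) (hKint b hb x _) hFa0 hFb0 ht hs hts
  -- operator norm inequality
  have hnormineq : ∀ a ∈ Ioc (0:ℝ) κ₀, ∀ b ∈ Ioc (0:ℝ) κ₀, ∀ t s : ℝ, 0 ≤ t → 0 ≤ s →
      t + s = 1 → t*a+s*b ∈ Ioc (0:ℝ) κ₀ → ∀ n : ℕ,
      ‖(T (t*a+s*b)) ^ n‖ ≤ ‖(T a) ^ n‖ ^ t * ‖(T b) ^ n‖ ^ s := by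
    intro a ha b hb t s ht hs hts hκ n
    rw [hnorm_n1 _ hκ n, hnorm_n1 a ha n, hnorm_n1 b hb n]
    refine (ContinuousMap.norm_le _ (mul_nonneg (Real.rpow_nonneg (norm_nonneg _) _)
      (Real.rpow_nonneg (norm_nonneg _) _))).mpr fun x => ?_
    rw [Real.norm_eq_abs, abs_of_nonneg (hposn _ hκ n x)]
    have hax : (((T a) ^ n) 1) x ≤ ‖((T a) ^ n) 1‖ := by
      have h5 := (((T a) ^ n) 1).norm_coe_le_norm x
      rw [Real.norm_eq_abs] at h5
      exact le_trans (le_abs_self _) h5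
    have hbx : (((T b) ^ n) 1) x ≤ ‖((T b) ^ n) 1‖ := by
      have h5 := (((T b) ^ n) 1).norm_coe_le_norm x
      rw [Real.norm_eq_abs] at h5
      exact le_trans (le_abs_self _) h5
    calc (((T (t*a+s*b)) ^ n) 1) x
        ≤ ((((T a) ^ n) 1) x) ^ t * ((((T b) ^ n) 1) x) ^ s :=
          hkey a ha b hb t s ht hs hts hκ n x
      _ ≤ ‖((T a) ^ n) 1‖ ^ t * ‖((T b) ^ n) 1‖ ^ s := by
          refine mul_le_mul (Real.rpow_le_rpow (hposn a ha n x) hax ht)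
            (Real.rpow_le_rpow (hposn b hb n x) hbx hs)
            (Real.rpow_nonneg (hposn b hb n x) _) (Real.rpow_nonneg (norm_nonneg _) _)
  -- positivity of the spectral radius
  have hρpos : ∀ κ ∈ Ioc (0:ℝ) κ₀, 0 < ρ κ := by
    intro κ hκ
    obtain ⟨x₀, -, hx₀'⟩ := isCompact_univ.exists_isMinOn univ_nonempty
      (((T κ) 1).continuous.continuousOn)
    have hx₀ : ∀ x, (T κ) 1 x₀ ≤ (T κ) 1 x := fun x => isMinOn_iff.mp hx₀' x (mem_univ x)
    have hint1 : ∀ x : Metric.sphere (0 : EuclideanSpace ℝ (Fin d)) 1,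
        Integrable (fun ω => ‖vecMulE x.1 (M ω)‖ ^ κ) μ := by
      intro x
      have h6 := hKint κ hκ x 1
      simpa using h6
    have hTx : ∀ x, (T κ) 1 x = ∫ ω, ‖vecMulE x.1 (M ω)‖ ^ κ ∂μ := by
      intro x
      rw [hT κ hκ 1 x]
      simp
    have hcpos : 0 < (T κ) 1 x₀ := by
      rw [hTx]
      rw [integral_pos_iff_support_of_nonneg
        (Pi.le_def.mpr fun ω => Real.rpow_nonneg (norm_nonneg _) _) (hint1 x₀)]
      have hsupp : Function.support (fun ω => ‖vecMulE x₀.1 (M ω)‖ ^ κ) = univ := by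
        refine eq_univ_of_forall fun ω => ?_
        exact (Real.rpow_pos_of_pos (norm_pos_iff.mpr (hne x₀ ω)) κ).ne'
      rw [hsupp]
      simp
    set c := (T κ) 1 x₀ with hc
    have hlow : ∀ n : ℕ, ∀ x, c ^ n ≤ (((T κ) ^ n) 1) x := by
      intro n
      induction n with
      | zero =>
        intro x
        rw [hzero]
        simp
      | succ n ih =>
        intro x
        rw [hpow, hT κ hκ _ x]
        have h2 : ∫ ω, ‖vecMulE x.1 (M ω)‖ ^ κ * c ^ n ∂μ
            ≤ ∫ ω, ‖vecMulE x.1 (M ω)‖ ^ κ *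
              ((((T κ) ^ n) 1) (projS (vecMulE x.1 (M ω)) (hne x ω))) ∂μ :=
          integral_mono ((hint1 x).mul_const _) (hKint κ hκ x _)
            (fun ω => mul_le_mul_of_nonneg_left (ih _) (Real.rpow_nonneg (norm_nonneg _) _))
        have h3 : ∫ ω, ‖vecMulE x.1 (M ω)‖ ^ κ * c ^ n ∂μ
            = (∫ ω, ‖vecMulE x.1 (M ω)‖ ^ κ ∂μ) * c ^ n := integral_mul_const _ _
        have h4 : c ^ (n+1) ≤ (∫ ω, ‖vecMulE x.1 (M ω)‖ ^ κ ∂μ) * c ^ n := by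
          rw [pow_succ']
          rw [← hTx x]
          exact mul_le_mul_of_nonneg_right (hx₀ x) (pow_nonneg hcpos.le n)
        linarith
    have hlown : ∀ n : ℕ, c ^ n ≤ ‖(T κ) ^ n‖ := by
      intro n
      rw [hnorm_n1 κ hκ n]
      have h5 := (((T κ) ^ n) 1).norm_coe_le_norm x₀
      rw [Real.norm_eq_abs] at h5
      exact le_trans (hlow n x₀) (le_trans (le_abs_self _) h5)
    have hfin : c ≤ ρ κ := by
      refine ge_of_tendsto (hρ κ hκ) ?_
      filter_upwards [eventually_ge_atTop 1] with n hn
      have hn0 : (n:ℝ) ≠ 0 := Nat.cast_ne_zero.mpr (by omega)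
      have hceq : c = (c ^ n) ^ ((1:ℝ)/n) := by
        rw [← Real.rpow_natCast c n, ← Real.rpow_mul hcpos.le, mul_one_div, div_self hn0,
          Real.rpow_one]
      rw [hceq]
      exact Real.rpow_le_rpow (pow_nonneg hcpos.le n) (hlown n) (by positivity)
    exact lt_of_lt_of_le hcpos hfin
  -- limit inequality
  have hρle : ∀ a ∈ Ioc (0:ℝ) κ₀, ∀ b ∈ Ioc (0:ℝ) κ₀, ∀ t s : ℝ, 0 ≤ t → 0 ≤ s → t + s = 1 →
      t*a+s*b ∈ Ioc (0:ℝ) κ₀ → ρ (t*a+s*b) ≤ ρ a ^ t * ρ b ^ s := by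
    intro a ha b hb t s ht hs hts hκ
    have hlim : Tendsto (fun n : ℕ => (‖(T a) ^ n‖ ^ ((1:ℝ)/n)) ^ t * (‖(T b) ^ n‖ ^ ((1:ℝ)/n)) ^ s)
        atTop (nhds (ρ a ^ t * ρ b ^ s)) :=
      ((hρ a ha).rpow_const (Or.inr ht)).mul ((hρ b hb).rpow_const (Or.inr hs))
    refine le_of_tendsto_of_tendsto' (hρ _ hκ) hlim fun n => ?_
    have h1 := hnormineq a ha b hb t s ht hs hts hκ n
    calc ‖(T (t*a+s*b)) ^ n‖ ^ ((1:ℝ)/n)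
        ≤ (‖(T a) ^ n‖ ^ t * ‖(T b) ^ n‖ ^ s) ^ ((1:ℝ)/n) :=
          Real.rpow_le_rpow (ContinuousLinearMap.opNorm_nonneg _) h1 (by positivity)
      _ = (‖(T a) ^ n‖ ^ t) ^ ((1:ℝ)/n) * (‖(T b) ^ n‖ ^ s) ^ ((1:ℝ)/n) :=
          Real.mul_rpow (Real.rpow_nonneg (ContinuousLinearMap.opNorm_nonneg _) _)
            (Real.rpow_nonneg (ContinuousLinearMap.opNorm_nonneg _) _)
      _ = (‖(T a) ^ n‖ ^ ((1:ℝ)/n)) ^ t * (‖(T b) ^ n‖ ^ ((1:ℝ)/n)) ^ s := by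
          have hgen : ∀ X : ℝ, 0 ≤ X → ∀ u w : ℝ, (X ^ u) ^ w = (X ^ w) ^ u := by
            intro X hX u w
            rw [← Real.rpow_mul hX, ← Real.rpow_mul hX, mul_comm]
          rw [hgen ‖(T a) ^ n‖ (ContinuousLinearMap.opNorm_nonneg _) t ((1:ℝ)/n),
            hgen ‖(T b) ^ n‖ (ContinuousLinearMap.opNorm_nonneg _) s ((1:ℝ)/n)]
  -- log-convexity
  have hconv : ConvexOn ℝ (Ioo 0 κ₀) (fun k => Real.log (ρ k)) := by
    refine ⟨convex_Ioo 0 κ₀, ?_⟩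
    intro a ha b hb t s ht hs hts
    have hmem : t • a + s • b ∈ Ioo (0:ℝ) κ₀ := (convex_Ioo (0:ℝ) κ₀) ha hb ht hs hts
    simp only [smul_eq_mul] at hmem ⊢
    have haI : a ∈ Ioc (0:ℝ) κ₀ := ⟨ha.1, ha.2.le⟩
    have hbI : b ∈ Ioc (0:ℝ) κ₀ := ⟨hb.1, hb.2.le⟩
    have hκI : t*a+s*b ∈ Ioc (0:ℝ) κ₀ := ⟨hmem.1, hmem.2.le⟩
    have h1 := hρle a haI b hbI t s ht hs hts hκI
    have hpa := hρpos a haI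
    have hpb := hρpos b hbI
    have hpκ := hρpos _ hκI
    calc Real.log (ρ (t*a+s*b)) ≤ Real.log (ρ a ^ t * ρ b ^ s) := Real.log_le_log hpκ h1
      _ = t * Real.log (ρ a) + s * Real.log (ρ b) := by
          rw [Real.log_mul (Real.rpow_pos_of_pos hpa t).ne' (Real.rpow_pos_of_pos hpb s).ne',
            Real.log_rpow hpa, Real.log_rpow hpb]
  -- continuity
  have hcont : ContinuousOn ρ (Ioo 0 κ₀) := by
    have h1 := hconv.continuousOn isOpen_Ioo
    have h2 : ContinuousOn (fun k => Real.exp (Real.log (ρ k))) (Ioo 0 κ₀) :=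
      Real.continuous_exp.comp_continuousOn h1
    refine h2.congr fun k hk => ?_
    exact (Real.exp_log (hρpos k ⟨hk.1, hk.2.le⟩)).symm
  refine ⟨hconv, hcont, ?_⟩
  -- existence and uniqueness of the crossing point
  intro κ₂ κ₁ h2 h21 h10 hρ2 hρ1
  have hsub : Icc κ₂ κ₁ ⊆ Ioo 0 κ₀ := fun y hy => ⟨lt_of_lt_of_le h2 hy.1, lt_of_le_of_lt hy.2 h10⟩
  have hcc : ContinuousOn ρ (Icc κ₂ κ₁) := hcont.mono hsub
  obtain ⟨k, hk, hk1⟩ := intermediate_value_Ioo h21.le hcc (⟨hρ2, hρ1⟩ : (1:ℝ) ∈ Ioo (ρ κ₂) (ρ κ₁))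
  have huniq : ∀ y z : ℝ, y ∈ Ioo κ₂ κ₁ → z ∈ Ioo κ₂ κ₁ → ρ y = 1 → ρ z = 1 → y < z → False := by
    intro y z hy hz hρy hρz hyz
    have hzκ : 0 < z - κ₂ := by linarith [hy.1, hyz]
    set τ := (z - y)/(z - κ₂) with hτ
    set σ := (y - κ₂)/(z - κ₂) with hσ
    have hτ0 : 0 < τ := div_pos (by linarith) hzκ
    have hσ0 : 0 < σ := div_pos (by linarith [hy.1]) hzκ
    have hτσ : τ + σ = 1 := by
      rw [hτ, hσ]
      field_simp
      ring
    have hcomb : τ * κ₂ + σ * z = y := by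
      rw [hτ, hσ]
      field_simp
      ring
    have hκ₂m : κ₂ ∈ Ioo (0:ℝ) κ₀ := ⟨h2, by linarith⟩
    have hzm : z ∈ Ioo (0:ℝ) κ₀ := ⟨by linarith [hz.1], by linarith [hz.2]⟩
    have hcvx := hconv.2 hκ₂m hzm hτ0.le hσ0.le hτσ
    simp only [smul_eq_mul] at hcvx
    rw [hcomb] at hcvx
    have hlogy : Real.log (ρ y) = 0 := by rw [hρy, Real.log_one]
    have hlogz : Real.log (ρ z) = 0 := by rw [hρz, Real.log_one]
    have hlog2 : Real.log (ρ κ₂) < 0 :=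
      Real.log_neg (hρpos κ₂ ⟨h2, by linarith⟩) hρ2
    rw [hlogy, hlogz] at hcvx
    nlinarith
  refine ⟨k, ⟨hk, hk1⟩, ?_⟩
  rintro y ⟨hy, hy1⟩
  rcases lt_trichotomy y k with hlt | heq | hgt
  · exact absurd (huniq y k hy hk hy1 hk1 hlt) not_false
  · exact heq
  · exact absurd (huniq k y hk hy hk1 hy1 hgt) not_false
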